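/- arXiv:2306.00460 — 4 statements merged into one kernel-verified Lean document; each statement's English description precedes it below -/
import Mathlib

section
/- Fix σ < 1/2 and suppose there exist constants c > 0 and ε ∈ (0, 1/2 − σ) such that |ζ(σ+it)| > c·|t|^{1/2−σ−ε} for all |t| ≥ 2. Then the set {ζ(σ+it) : t ∈ ℝ} is nowhere dense in ℂ. -/
open Complex

/-- if σ < 1/2 and |ζ(σ+it)| > c|t|^{1/2−σ−ε} for |t| ≥ 2, then the image
of the vertical line Re s = σ under ζ is nowhere dense in ℂ. -/
theorem zeta_vertical_line_nowhere_dense (σ : ℝ) (hσ : σ < 1/2)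
    (c ε : ℝ) (hc : 0 < c) (hε : 0 < ε) (hεσ : ε < 1/2 - σ)
    (hlower : ∀ t : ℝ, 2 ≤ |t| →
      c * |t| ^ (1/2 - σ - ε) < ‖riemannZeta (σ + Complex.I * (t:ℂ))‖) :
    interior (closure {z : ℂ | ∃ t : ℝ, z = riemannZeta (σ + Complex.I * (t:ℂ))}) = ∅ := by
  set α : ℝ := 1/2 - σ - ε with hα
  have hα0 : 0 < α := by simp only [hα]; linarith
  set f : ℝ → ℂ := fun t => riemannZeta (σ + Complex.I * (t:ℂ)) with hfdef
  set S : Set ℂ := {z : ℂ | ∃ t : ℝ, z = riemannZeta (σ + Complex.I * (t:ℂ))} with hSdef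
  -- f is C¹
  have hζan : ∀ t : ℝ, AnalyticAt ℂ riemannZeta ((σ:ℂ) + Complex.I * t) := by
    intro t
    have hd : DifferentiableOn ℂ riemannZeta {(1 : ℂ)}ᶜ := fun s hs =>
      (differentiableAt_riemannZeta hs).differentiableWithinAt
    have hmem : ((σ:ℂ) + Complex.I * t) ∈ ({(1 : ℂ)}ᶜ : Set ℂ) := by
      simp only [Set.mem_compl_iff, Set.mem_singleton_iff]
      intro h
      have := congrArg Complex.re h
      simp at this
      linarith
    exact hd.analyticOnNhd isOpen_compl_singleton _ hmem
  have hf : ContDiff ℝ 1 f := by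
    rw [contDiff_iff_contDiffAt]
    intro t
    have hg : ContDiff ℝ 1 (fun t : ℝ => (σ:ℂ) + Complex.I * (t:ℂ)) :=
      contDiff_const.add (contDiff_const.mul Complex.ofRealCLM.contDiff)
    exact ((hζan t).contDiffAt.restrict_scalars ℝ).comp t hg.contDiffAt
  -- main argument
  by_contra h
  obtain ⟨z, hz⟩ := Set.nonempty_iff_ne_empty.2 h
  rw [mem_interior_iff_mem_nhds] at hz
  obtain ⟨r, hr0, hball⟩ := Metric.nhds_basis_ball.mem_iff.1 hz
  set T : ℝ := max 2 (((‖z‖ + r) / c) ^ α⁻¹) with hT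
  have hT2 : (2:ℝ) ≤ T := le_max_left _ _
  -- for |t| > T, f t is outside ball z r
  have hout : ∀ t : ℝ, T < |t| → r < dist (f t) z := by
    intro t ht
    have h2t : (2:ℝ) ≤ |t| := le_trans hT2 ht.le
    have hx : (0:ℝ) ≤ (‖z‖ + r) / c := by positivity
    have h1 : (‖z‖ + r) / c ≤ |t| ^ α := by
      calc (‖z‖ + r) / c = (((‖z‖ + r) / c) ^ α⁻¹) ^ α :=
            (Real.rpow_inv_rpow hx hα0.ne').symm
        _ ≤ |t| ^ α := by
            apply Real.rpow_le_rpow (Real.rpow_nonneg hx _) _ hα0.le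
            exact le_trans (le_max_right _ _) ht.le
    have h2 : ‖z‖ + r ≤ c * |t| ^ α := by
      rw [← div_le_iff₀' hc]; exact h1
    have h3 : ‖z‖ + r < ‖f t‖ := by
      have := hlower t h2t
      exact lt_of_le_of_lt h2 this
    have h4 : ‖f t‖ - ‖z‖ ≤ dist (f t) z := by
      rw [dist_eq_norm]; exact norm_sub_norm_le _ _
    linarith
  -- S ∩ ball z r ⊆ f '' [-T, T]
  set K : Set ℂ := f '' Set.Icc (-T) T with hK
  have hSK : S ∩ Metric.ball z r ⊆ K := by
    rintro w ⟨⟨t, rfl⟩, hw⟩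
    refine ⟨t, ?_, rfl⟩
    rw [Set.mem_Icc, ← abs_le]
    by_contra hcon
    push_neg at hcon
    exact absurd (Metric.mem_ball.1 hw) (not_lt.2 (hout t hcon).le)
  have hKclosed : IsClosed K :=
    (isCompact_Icc.image hf.continuous).isClosed
  -- ball z r ⊆ K
  have hballK : Metric.ball z r ⊆ K := by
    intro w hw
    have h1 : w ∈ Metric.ball z r ∩ closure S := ⟨hw, hball hw⟩
    have h2 : w ∈ closure (Metric.ball z r ∩ S) :=
      Metric.isOpen_ball.inter_closure h1
    have h3 : closure (Metric.ball z r ∩ S) ⊆ K := by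
      rw [← hKclosed.closure_eq]
      exact closure_mono fun x hx => hSK ⟨hx.2, hx.1⟩
    exact h3 h2
  -- dimension contradiction
  have hdimK : dimH K ≤ 1 := by
    calc dimH K ≤ dimH (Set.Icc (-T) T) :=
          hf.contDiffOn.dimH_image_le convex_univ (Set.subset_univ _)
      _ ≤ dimH (Set.univ : Set ℝ) := dimH_mono (Set.subset_univ _)
      _ = 1 := Real.dimH_univ
  have hdimK2 : dimH K = 2 := by
    have : K ∈ nhds z := Filter.mem_of_superset (Metric.ball_mem_nhds z hr0) hballK
    rw [Real.dimH_of_mem_nhds this, Complex.finrank_real_complex]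
    norm_num
  rw [hdimK2] at hdimK
  norm_num at hdimK
end

section
/- Let f be holomorphic on a neighborhood of the closed disk D̄(α'+it₀, 2ε), with a zero of order m at α'+it₀ and no other zeros in D̄(α'+it₀, 2ε). Then the one-sided derivatives at σ = α' of the function σ ↦ ∫_{t₀−ε}^{t₀+ε} log|f(σ+it)| dt exist and equal ±mπ + ∫_{t₀−ε}^{t₀+ε} Re(f'(α'+it)/f(α'+it)) dt (with + for the right derivative and − for the left derivative), where the integral is understood as a convergent improper integral. -/
open Complex intervalIntegral

open Real MeasureTheory Set Filter Topology

lemma aux_intervalIntegrable_log0 {c : ℝ} (hc : 0 < c) :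
    IntervalIntegrable Real.log volume 0 c := by
  have hbase : ∀ d : ℝ, 0 < d → d ≤ 1 → IntervalIntegrable Real.log volume 0 d := by
    intro d hd hd1
    have hint : IntegrableOn (fun x : ℝ => -Real.log x) (Set.Ioc 0 d) volume := by
      apply intervalIntegral.integrableOn_deriv_of_nonneg
        (g := fun u : ℝ => u - u * Real.log u)
      · exact (continuous_id.sub Real.continuous_mul_log).continuousOn
      · intro x hx
        have := (hasDerivAt_id x).sub (Real.hasDerivAt_mul_log hx.1.ne')
        refine this.congr_deriv ?_
        ring
      · intro x hx
        simpa using Real.log_nonpos hx.1.le (hx.2.le.trans hd1)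
    have : IntegrableOn Real.log (Set.Ioc 0 d) volume := by
      refine hint.neg.congr (Filter.Eventually.of_forall fun x => by simp)
    rw [intervalIntegrable_iff, Set.uIoc_of_le hd.le]
    exact this
  rcases le_or_gt c 1 with h | h
  · exact hbase c hc h
  · refine (hbase 1 one_pos le_rfl).trans ?_
    exact intervalIntegrable_log (by rw [Set.uIcc_of_le h.le]; rintro ⟨h0, -⟩; linarith)

lemma aux_integral_log0 {c : ℝ} (hc : 0 < c) :
    ∫ u in (0:ℝ)..c, Real.log u = c * Real.log c - c := by
  have := intervalIntegral.integral_eq_sub_of_hasDeriv_right_of_le (f := fun u => u * Real.log u - u)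
    (f' := Real.log) hc.le
    ((Real.continuous_mul_log.sub continuous_id).continuousOn)
    (fun x hx => by
      have := (Real.hasDerivAt_mul_log hx.1.ne').sub (hasDerivAt_id x)
      have h2 : Real.log x + 1 - 1 = Real.log x := by ring
      rw [h2] at this
      exact this.hasDerivWithinAt)
    (aux_intervalIntegrable_log0 hc)
  simpa using this

lemma aux_hasDerivAt_log_abs {w : ℂ → ℂ} {w' : ℂ} {σ t : ℝ}
    (hw : HasDerivAt w w' ((σ:ℂ) + Complex.I * t))
    (h0 : w ((σ:ℂ) + Complex.I * t) ≠ 0) :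
    HasDerivAt (fun x : ℝ => Real.log (‖w ((x:ℂ) + Complex.I * t)‖))
      ((w' / w ((σ:ℂ) + Complex.I * t)).re) σ := by
  set z : ℂ := (σ:ℂ) + Complex.I * t with hz
  -- derivative of x ↦ w (x + I t) : ℝ → ℂ
  have h1 : HasDerivAt (fun x : ℝ => w ((x:ℂ) + Complex.I * t)) w' σ := by
    have hw2 : HasDerivAt (fun s : ℂ => w (s + Complex.I * t)) w' (σ:ℂ) := by
      have := hw.comp (σ:ℂ) ((hasDerivAt_id (σ:ℂ)).add_const (Complex.I * t))
      rw [mul_one] at this; exact this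
    exact hw2.comp_ofReal
  have hu : HasDerivAt (fun x : ℝ => (w ((x:ℂ) + Complex.I * t)).re) w'.re σ :=
    Complex.reCLM.hasFDerivAt.comp_hasDerivAt σ h1
  have hv : HasDerivAt (fun x : ℝ => (w ((x:ℂ) + Complex.I * t)).im) w'.im σ :=
    Complex.imCLM.hasFDerivAt.comp_hasDerivAt σ h1
  have hN : HasDerivAt (fun x : ℝ => (w ((x:ℂ) + Complex.I * t)).re ^ 2
      + (w ((x:ℂ) + Complex.I * t)).im ^ 2)
      (2 * (w z).re * w'.re + 2 * (w z).im * w'.im) σ := by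
    have := ((hu.pow 2).add (hv.pow 2))
    refine this.congr_deriv ?_
    push_cast
    ring
  have hNpos : 0 < (w z).re ^ 2 + (w z).im ^ 2 := by
    have := Complex.normSq_pos.mpr h0
    simpa [Complex.normSq_apply, sq] using this
  have hlog := (hN.log hNpos.ne')
  have heq : (fun x : ℝ => Real.log (‖w ((x:ℂ) + Complex.I * t)‖))
      = fun x : ℝ => Real.log ((w ((x:ℂ) + Complex.I * t)).re ^ 2
        + (w ((x:ℂ) + Complex.I * t)).im ^ 2) / 2 := by
    funext x
    rw [Complex.norm_def, Real.log_sqrt (Complex.normSq_nonneg _), Complex.normSq_apply]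
    ring_nf
  rw [heq]
  have := hlog.div_const 2
  refine this.congr_deriv ?_
  rw [Complex.div_re]
  have hns : Complex.normSq (w z) = (w z).re ^ 2 + (w z).im ^ 2 := by
    simp [Complex.normSq_apply, sq]
  rw [hns]
  rw [← hz]
  field_simp

-- derivative of the antiderivative for x ≠ 0
lemma aux_antideriv {x t₀ : ℝ} (hx : x ≠ 0) (t : ℝ) :
    HasDerivAt (fun t : ℝ => (t - t₀) * Real.log (x^2 + (t - t₀)^2) - 2*(t - t₀)
      + 2*x*Real.arctan ((t - t₀)/x))
      (Real.log (x^2 + (t - t₀)^2)) t := by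
  have hD : 0 < x^2 + (t - t₀)^2 := by positivity
  have h1 : HasDerivAt (fun t : ℝ => t - t₀) 1 t := (hasDerivAt_id t).sub_const t₀
  have h2 : HasDerivAt (fun t : ℝ => x^2 + (t - t₀)^2) (2*(t - t₀)) t := by
    have := (h1.pow 2).const_add (x^2)
    refine this.congr_deriv ?_
    push_cast; ring
  have h3 : HasDerivAt (fun t : ℝ => Real.log (x^2 + (t - t₀)^2))
      (2*(t - t₀) / (x^2 + (t - t₀)^2)) t := h2.log hD.ne'
  have h4 := h1.mul h3
  have h5 : HasDerivAt (fun t : ℝ => Real.arctan ((t - t₀)/x))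
      (1 / (1 + ((t - t₀)/x)^2) * (1/x)) t := (h1.div_const x).arctan
  have h6 := (h4.sub (h1.const_mul 2)).add ((h5.const_mul (2*x)))
  refine h6.congr_deriv ?_
  have h7 : 1 + ((t - t₀)/x)^2 = (x^2 + (t - t₀)^2)/x^2 := by
    field_simp
  rw [h7]
  have hx2 : (0:ℝ) < x^2 := by positivity
  field_simp
  ring

lemma aux_log_intervalIntegrable (a b : ℝ) : IntervalIntegrable Real.log volume a b := by
  have h0 : ∀ c : ℝ, IntervalIntegrable Real.log volume 0 c := by
    intro c
    rcases lt_trichotomy c 0 with h | h | h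
    · have := aux_intervalIntegrable_log0 (neg_pos.mpr h)
      have h2 := (IntervalIntegrable.iff_comp_neg (by simp)).mp this
      simp only [neg_zero, neg_neg] at h2
      have h3 : (fun x : ℝ => Real.log (-x)) = Real.log := by
        funext x; rw [Real.log_neg_eq_log]
      rwa [h3] at h2
    · simp [h]
    · exact aux_intervalIntegrable_log0 h
  exact ((h0 a).symm.trans (h0 b))

lemma aux_log_shift_integrable (t₀ a b : ℝ) :
    IntervalIntegrable (fun t : ℝ => Real.log (t - t₀)) volume a b := by
  have := (aux_log_intervalIntegrable (a - t₀) (b - t₀)).comp_sub_right t₀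
  simpa using this

lemma aux_q_integrable {x t₀ : ℝ} (a b : ℝ) :
    IntervalIntegrable (fun t : ℝ => Real.log (x^2 + (t - t₀)^2)) volume a b := by
  rcases eq_or_ne x 0 with rfl | hx
  · have h1 : (fun t : ℝ => Real.log ((0:ℝ)^2 + (t - t₀)^2))
        = fun t : ℝ => 2 * Real.log (t - t₀) := by
      funext t
      rw [show (0:ℝ)^2 + (t - t₀)^2 = (t - t₀)^2 by ring, Real.log_pow]
      push_cast; ring
    rw [h1]
    exact (aux_log_shift_integrable t₀ a b).const_mul 2
  · apply ContinuousOn.intervalIntegrable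
    apply ContinuousOn.log
    · fun_prop
    · intro t _
      positivity

lemma aux_K_ne {x t₀ ε : ℝ} (hx : x ≠ 0) (hε : 0 < ε) :
    ∫ t in (t₀ - ε)..(t₀ + ε), Real.log (x^2 + (t - t₀)^2)
      = 2*ε*Real.log (x^2 + ε^2) - 4*ε + 4*x*Real.arctan (ε/x) := by
  rw [intervalIntegral.integral_eq_sub_of_hasDerivAt
    (fun t _ => aux_antideriv hx t) (aux_q_integrable _ _)]
  simp only [add_sub_cancel_left, sub_sub_cancel_left]
  rw [neg_div, Real.arctan_neg]
  ring_nf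

lemma aux_K_zero {t₀ ε : ℝ} (hε : 0 < ε) :
    ∫ t in (t₀ - ε)..(t₀ + ε), Real.log ((0:ℝ)^2 + (t - t₀)^2)
      = 4*ε*Real.log ε - 4*ε := by
  have h1 : (fun t : ℝ => Real.log ((0:ℝ)^2 + (t - t₀)^2))
      = fun t : ℝ => 2 * Real.log (t - t₀) := by
    funext t
    rw [show (0:ℝ)^2 + (t - t₀)^2 = (t - t₀)^2 by ring, Real.log_pow]
    push_cast; ring
  rw [h1, intervalIntegral.integral_const_mul]
  have h2 : ∫ t in (t₀ - ε)..(t₀ + ε), Real.log (t - t₀)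
      = ∫ u in (-ε)..ε, Real.log u := by
    have := intervalIntegral.integral_comp_sub_right (a := t₀ - ε) (b := t₀ + ε) Real.log t₀
    simpa using this
  rw [h2]
  have h3 : ∫ u in (-ε)..(0:ℝ), Real.log u = ε * Real.log ε - ε := by
    have hneg : ∫ u in (-ε)..(0:ℝ), Real.log u = ∫ u in (-ε)..(0:ℝ), Real.log (-u) := by
      congr 1; funext u; rw [Real.log_neg_eq_log]
    rw [hneg, intervalIntegral.integral_comp_neg Real.log]
    simpa using aux_integral_log0 hε
  rw [← intervalIntegral.integral_add_adjacent_intervals (b := (0:ℝ))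
    (aux_log_intervalIntegrable _ _) (aux_log_intervalIntegrable _ _), h3, aux_integral_log0 hε]
  ring

lemma aux_psi_slope {ε : ℝ} (hε : 0 < ε) :
    Tendsto (fun x : ℝ => (Real.log (x^2 + ε^2) - Real.log (0^2 + ε^2)) / x)
      (𝓝[≠] (0:ℝ)) (𝓝 0) := by
  have h2 : HasDerivAt (fun x : ℝ => x^2 + ε^2) 0 (0:ℝ) := by
    have := (hasDerivAt_pow 2 (0:ℝ)).add_const (ε^2)
    simpa using this
  have hψ : HasDerivAt (fun x : ℝ => Real.log (x^2 + ε^2)) 0 (0:ℝ) := by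
    have := h2.log (by positivity)
    simpa using this
  have := hasDerivAt_iff_tendsto_slope.mp hψ
  refine this.congr (fun x => ?_)
  simp [slope_def_field]

lemma aux_arctan_right {ε : ℝ} (hε : 0 < ε) :
    Tendsto (fun x : ℝ => Real.arctan (ε/x)) (𝓝[>] (0:ℝ)) (𝓝 (π/2)) := by
  have h1 : Tendsto (fun x : ℝ => ε/x) (𝓝[>] (0:ℝ)) atTop := by
    have := (tendsto_inv_nhdsGT_zero (𝕜 := ℝ)).const_mul_atTop hε
    refine this.congr (fun x => ?_)
    rw [div_eq_mul_inv]
  exact (Real.tendsto_arctan_atTop.mono_right nhdsWithin_le_nhds).comp h1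

lemma aux_arctan_left {ε : ℝ} (hε : 0 < ε) :
    Tendsto (fun x : ℝ => Real.arctan (ε/x)) (𝓝[<] (0:ℝ)) (𝓝 (-(π/2))) := by
  have hneg : Tendsto (fun x : ℝ => -x) (𝓝[<] (0:ℝ)) (𝓝[>] (0:ℝ)) := by
    rw [tendsto_nhdsWithin_iff]
    constructor
    · have : Tendsto (fun x : ℝ => -x) (𝓝 (0:ℝ)) (𝓝 (0:ℝ)) := by
        simpa using (continuous_neg.tendsto (0:ℝ))
      exact this.mono_left nhdsWithin_le_nhds
    · filter_upwards [self_mem_nhdsWithin] with x hx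
      simpa using hx
  have h1 : Tendsto (fun x : ℝ => ε/x) (𝓝[<] (0:ℝ)) atBot := by
    have h2 : Tendsto (fun x : ℝ => ε/(-x)) (𝓝[<] (0:ℝ)) atTop := by
      have := (tendsto_inv_nhdsGT_zero (𝕜 := ℝ)).const_mul_atTop hε
      have h3 := (this.comp hneg)
      refine h3.congr (fun x => ?_)
      simp [div_eq_mul_inv, Function.comp]
    have := tendsto_neg_atTop_atBot.comp h2
    refine this.congr (fun x => ?_)
    simp [Function.comp, neg_div, div_neg]
  exact (Real.tendsto_arctan_atBot.mono_right nhdsWithin_le_nhds).comp h1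

lemma aux_K_slope_right {t₀ ε : ℝ} (hε : 0 < ε) :
    Tendsto (fun x : ℝ => ((∫ t in (t₀-ε)..(t₀+ε), Real.log (x^2 + (t-t₀)^2))
        - ∫ t in (t₀-ε)..(t₀+ε), Real.log ((0:ℝ)^2 + (t-t₀)^2)) / x)
      (𝓝[>] (0:ℝ)) (𝓝 (2*π)) := by
  have hmain : Tendsto (fun x : ℝ =>
      2*ε*((Real.log (x^2 + ε^2) - Real.log (0^2 + ε^2)) / x) + 4*Real.arctan (ε/x))
      (𝓝[>] (0:ℝ)) (𝓝 (2*ε*0 + 4*(π/2))) := by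
    exact (((aux_psi_slope hε).mono_left
      (nhdsWithin_mono 0 (fun x hx => ne_of_gt hx))).const_mul (2*ε)).add
      ((aux_arctan_right hε).const_mul 4)
  have hval : 2*ε*0 + 4*(π/2) = 2*π := by ring
  rw [hval] at hmain
  refine hmain.congr' ?_
  filter_upwards [self_mem_nhdsWithin] with x hx
  have hx0 : x ≠ 0 := ne_of_gt hx
  rw [aux_K_ne hx0 hε, aux_K_zero hε]
  have hε2 : Real.log (0^2 + ε^2) = 2 * Real.log ε := by
    rw [show (0:ℝ)^2 + ε^2 = ε^2 by ring, Real.log_pow]; push_cast; ring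
  rw [hε2]
  field_simp
  ring

lemma aux_K_slope_left {t₀ ε : ℝ} (hε : 0 < ε) :
    Tendsto (fun x : ℝ => ((∫ t in (t₀-ε)..(t₀+ε), Real.log (x^2 + (t-t₀)^2))
        - ∫ t in (t₀-ε)..(t₀+ε), Real.log ((0:ℝ)^2 + (t-t₀)^2)) / x)
      (𝓝[<] (0:ℝ)) (𝓝 (-(2*π))) := by
  have hmain : Tendsto (fun x : ℝ =>
      2*ε*((Real.log (x^2 + ε^2) - Real.log (0^2 + ε^2)) / x) + 4*Real.arctan (ε/x))
      (𝓝[<] (0:ℝ)) (𝓝 (2*ε*0 + 4*(-(π/2)))) := by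
    exact (((aux_psi_slope hε).mono_left
      (nhdsWithin_mono 0 (fun x hx => ne_of_lt hx))).const_mul (2*ε)).add
      ((aux_arctan_left hε).const_mul 4)
  have hval : 2*ε*0 + 4*(-(π/2)) = -(2*π) := by ring
  rw [hval] at hmain
  refine hmain.congr' ?_
  filter_upwards [self_mem_nhdsWithin] with x hx
  have hx0 : x ≠ 0 := ne_of_lt hx
  rw [aux_K_ne hx0 hε, aux_K_zero hε]
  have hε2 : Real.log (0^2 + ε^2) = 2 * Real.log ε := by
    rw [show (0:ℝ)^2 + ε^2 = ε^2 by ring, Real.log_pow]; push_cast; ring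
  rw [hε2]
  field_simp
  ring

/-- if f has a zero of order m at α'+it₀ and no other zero on the closed
disk D̄(α'+it₀, 2ε) (encoded by the factorization f(s) = (s−α'−it₀)^m g(s) with g
holomorphic and nonvanishing there), then the one-sided derivatives at σ = α' of
σ ↦ ∫_{t₀−ε}^{t₀+ε} log|f(σ+it)| dt exist and equal
±mπ + ∫_{t₀−ε}^{t₀+ε} Re(f'/f)(α'+it) dt. -/
theorem one_sided_deriv_log_abs_integral_at_zero
    (f g : ℂ → ℂ) (α' t₀ ε : ℝ) (hε : 0 < ε) (m : ℕ) (hm : 0 < m)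
    (U : Set ℂ) (hU : IsOpen U)
    (hBU : Metric.closedBall ((α' : ℂ) + Complex.I * (t₀:ℂ)) (2*ε) ⊆ U)
    (hf : DifferentiableOn ℂ f U) (hg : DifferentiableOn ℂ g U)
    (hgne : ∀ s ∈ Metric.closedBall ((α' : ℂ) + Complex.I * (t₀:ℂ)) (2*ε), g s ≠ 0)
    (hfac : ∀ s ∈ Metric.closedBall ((α' : ℂ) + Complex.I * (t₀:ℂ)) (2*ε),
      f s = (s - ((α' : ℂ) + Complex.I * (t₀:ℂ)))^m * g s) :
    HasDerivWithinAt
      (fun σ : ℝ => ∫ t in (t₀ - ε)..(t₀ + ε),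
        Real.log ‖f ((σ : ℂ) + Complex.I * (t:ℂ))‖)
      ((m : ℝ) * Real.pi + ∫ t in (t₀ - ε)..(t₀ + ε),
        (deriv f ((α' : ℂ) + Complex.I * (t:ℂ)) /
          f ((α' : ℂ) + Complex.I * (t:ℂ))).re)
      (Set.Ici α') α' ∧
    HasDerivWithinAt
      (fun σ : ℝ => ∫ t in (t₀ - ε)..(t₀ + ε),
        Real.log ‖f ((σ : ℂ) + Complex.I * (t:ℂ))‖)
      (-((m : ℝ) * Real.pi) + ∫ t in (t₀ - ε)..(t₀ + ε),
        (deriv f ((α' : ℂ) + Complex.I * (t:ℂ)) /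
          f ((α' : ℂ) + Complex.I * (t:ℂ))).re)
      (Set.Iic α') α' := by
  set s₀ : ℂ := (α' : ℂ) + Complex.I * (t₀:ℂ) with hs₀
  have hab : t₀ - ε ≤ t₀ + ε := by linarith
  -- membership of points in the closed ball
  have hmem : ∀ x t : ℝ, |x - α'| ≤ ε → t ∈ Set.Icc (t₀ - ε) (t₀ + ε) →
      ((x:ℂ) + Complex.I * t) ∈ Metric.closedBall s₀ (2*ε) := by
    intro x t hx ht
    rw [Metric.mem_closedBall, Complex.dist_eq]
    have hzz : (x:ℂ) + Complex.I * t - s₀ = ((x - α' : ℝ) : ℂ) + Complex.I * ((t - t₀ : ℝ) : ℂ) := by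
      rw [hs₀]; push_cast; ring
    rw [hzz]
    calc ‖((x - α' : ℝ) : ℂ) + Complex.I * ((t - t₀ : ℝ) : ℂ)‖
        ≤ ‖((x - α' : ℝ) : ℂ)‖ + ‖Complex.I * ((t - t₀ : ℝ) : ℂ)‖ :=
          norm_add_le _ _
      _ = |x - α'| + |t - t₀| := by
          rw [norm_mul, Complex.norm_I, one_mul, Complex.norm_real, Real.norm_eq_abs, Complex.norm_real, Real.norm_eq_abs]
      _ ≤ ε + ε := by
          refine add_le_add hx ?_
          rw [abs_le]; constructor <;> [linarith [ht.1]; linarith [ht.2]]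
      _ = 2*ε := by ring
  -- inner map continuity
  have hinner : ∀ x : ℝ, Continuous (fun t : ℝ => (x:ℂ) + Complex.I * t) := by
    intro x; fun_prop
  -- continuity of t ↦ log |g (x+it)|
  have hL_cont : ∀ x : ℝ, |x - α'| ≤ ε →
      ContinuousOn (fun t : ℝ => Real.log (‖g ((x:ℂ) + Complex.I * t)‖))
        (Set.Icc (t₀ - ε) (t₀ + ε)) := by
    intro x hx
    have hgc : ContinuousOn (fun t : ℝ => g ((x:ℂ) + Complex.I * t)) (Set.Icc (t₀ - ε) (t₀ + ε)) :=
      hg.continuousOn.comp ((hinner x).continuousOn) (fun t ht => hBU (hmem x t hx ht))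
    exact (continuous_norm.comp_continuousOn hgc).log
      (fun t ht => norm_ne_zero_iff.mpr (hgne _ (hmem x t hx ht)))
  -- analyticity and bound for deriv g / g
  have hga := hg.analyticOnNhd hU
  have hdg_cont : ContinuousOn (deriv g) U := (hga.deriv).continuousOn
  have hquot_cont : ContinuousOn (fun z => deriv g z / g z) (Metric.closedBall s₀ (2*ε)) :=
    ((hdg_cont.mono hBU).div (hg.continuousOn.mono hBU) hgne)
  obtain ⟨C, hC⟩ := (isCompact_closedBall s₀ (2*ε)).exists_bound_of_continuousOn hquot_cont
  have hIoc_sub : Set.uIoc (t₀ - ε) (t₀ + ε) ⊆ Set.Icc (t₀ - ε) (t₀ + ε) := by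
    rw [Set.uIoc_of_le hab]; exact Set.Ioc_subset_Icc_self
  have hae_ne : ∀ᵐ t : ℝ, t ≠ t₀ := by
    have : (volume : Measure ℝ) {t₀} = 0 := measure_singleton t₀
    exact ae_iff.mpr (by simpa using this)
  -- the G part via dominated differentiation
  have harg_meas : ∀ᶠ (x : ℝ) in 𝓝 α', AEStronglyMeasurable
      (fun t : ℝ => Real.log (‖g ((x:ℂ) + Complex.I * t)‖))
      (volume.restrict (Set.uIoc (t₀ - ε) (t₀ + ε))) := by
    filter_upwards [Metric.ball_mem_nhds α' hε] with x hx
    have hx' : |x - α'| ≤ ε := by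
      rw [Metric.mem_ball, Real.dist_eq] at hx; exact hx.le
    exact ((hL_cont x hx').mono hIoc_sub).aestronglyMeasurable measurableSet_uIoc
  have harg_int : IntervalIntegrable
      (fun t : ℝ => Real.log (‖g ((α':ℂ) + Complex.I * t)‖)) volume
      (t₀ - ε) (t₀ + ε) :=
    ((hL_cont α' (by simpa using hε.le)).mono (by rw [Set.uIcc_of_le hab])).intervalIntegrable
  have harg_meas' : AEStronglyMeasurable
      (fun t : ℝ => ((deriv g ((α':ℂ) + Complex.I * t)) / g ((α':ℂ) + Complex.I * t)).re)
      (volume.restrict (Set.uIoc (t₀ - ε) (t₀ + ε))) := by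
    have h1 : ContinuousOn (fun t : ℝ => deriv g ((α':ℂ) + Complex.I * t) /
        g ((α':ℂ) + Complex.I * t)) (Set.Icc (t₀ - ε) (t₀ + ε)) :=
      hquot_cont.comp ((hinner α').continuousOn)
        (fun t ht => hmem α' t (by simpa using hε.le) ht)
    exact ((Complex.continuous_re.comp_continuousOn h1).mono
      hIoc_sub).aestronglyMeasurable measurableSet_uIoc
  have harg_bound : ∀ᵐ t : ℝ, t ∈ Set.uIoc (t₀ - ε) (t₀ + ε) → ∀ x ∈ Metric.ball α' ε,
      ‖((deriv g ((x:ℂ) + Complex.I * t)) / g ((x:ℂ) + Complex.I * t)).re‖ ≤ C := by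
    refine Filter.Eventually.of_forall (fun t ht x hx => ?_)
    have hx' : |x - α'| ≤ ε := by
      rw [Metric.mem_ball, Real.dist_eq] at hx; exact hx.le
    have hz := hmem x t hx' (hIoc_sub ht)
    calc ‖((deriv g ((x:ℂ) + Complex.I * t)) / g ((x:ℂ) + Complex.I * t)).re‖
        ≤ ‖(deriv g ((x:ℂ) + Complex.I * t)) / g ((x:ℂ) + Complex.I * t)‖ := by
          rw [Real.norm_eq_abs]; exact Complex.abs_re_le_norm _
      _ ≤ C := hC _ hz
  have harg_diff : ∀ᵐ t : ℝ, t ∈ Set.uIoc (t₀ - ε) (t₀ + ε) → ∀ x ∈ Metric.ball α' ε,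
      HasDerivAt (fun x : ℝ => Real.log (‖g ((x:ℂ) + Complex.I * t)‖))
        (((deriv g ((x:ℂ) + Complex.I * t)) / g ((x:ℂ) + Complex.I * t)).re) x := by
    refine Filter.Eventually.of_forall (fun t ht x hx => ?_)
    have hx' : |x - α'| ≤ ε := by
      rw [Metric.mem_ball, Real.dist_eq] at hx; exact hx.le
    have hz := hmem x t hx' (hIoc_sub ht)
    have hgd : HasDerivAt g (deriv g ((x:ℂ) + Complex.I * t)) ((x:ℂ) + Complex.I * t) :=
      (hg.differentiableAt (hU.mem_nhds (hBU hz))).hasDerivAt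
    exact aux_hasDerivAt_log_abs hgd (hgne _ hz)
  have hG := intervalIntegral.hasDerivAt_integral_of_dominated_loc_of_deriv_le
    (F := fun x : ℝ => fun t : ℝ => Real.log (‖g ((x:ℂ) + Complex.I * t)‖))
    (F' := fun x : ℝ => fun t : ℝ =>
      ((deriv g ((x:ℂ) + Complex.I * t)) / g ((x:ℂ) + Complex.I * t)).re)
    (x₀ := α') (a := t₀ - ε) (b := t₀ + ε) (bound := fun _ => C) (μ := volume) (Metric.ball_mem_nhds α' hε)
    harg_meas harg_int harg_meas' harg_bound intervalIntegrable_const harg_diff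
  -- identify the integral of Re(g'/g) with the goal integral Re(f'/f)
  have hint_eq : (∫ t in (t₀ - ε)..(t₀ + ε),
        ((deriv g ((α':ℂ) + Complex.I * t)) / g ((α':ℂ) + Complex.I * t)).re)
      = ∫ t in (t₀ - ε)..(t₀ + ε),
        (deriv f ((α' : ℂ) + Complex.I * (t:ℂ)) / f ((α' : ℂ) + Complex.I * (t:ℂ))).re := by
    refine intervalIntegral.integral_congr_ae ?_
    filter_upwards [hae_ne] with t htne htmem
    set z : ℂ := (α':ℂ) + Complex.I * t with hz
    have hzIcc := hIoc_sub htmem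
    have hzb : z ∈ Metric.closedBall s₀ (2*ε) := hmem α' t (by simpa using hε.le) hzIcc
    have hzball : z ∈ Metric.ball s₀ (2*ε) := by
      rw [Metric.mem_ball, Complex.dist_eq]
      have hzz : z - s₀ = Complex.I * ((t - t₀ : ℝ) : ℂ) := by rw [hz, hs₀]; push_cast; ring
      rw [hzz]
      have habsI : ‖Complex.I * ((t - t₀ : ℝ) : ℂ)‖ = |t - t₀| := by
        rw [norm_mul, Complex.norm_I, one_mul, Complex.norm_real, Real.norm_eq_abs]
      rw [habsI]
      have h1 : |t - t₀| ≤ ε := by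
        rw [abs_le]; constructor <;> [linarith [hzIcc.1]; linarith [hzIcc.2]]
      linarith
    have hp : z - s₀ ≠ 0 := by
      have hzz : z - s₀ = Complex.I * ((t - t₀ : ℝ) : ℂ) := by rw [hz, hs₀]; push_cast; ring
      rw [hzz]
      simp only [ne_eq, mul_eq_zero, Complex.I_ne_zero, false_or, Complex.ofReal_eq_zero,
        sub_eq_zero]
      exact htne
    have hgz0 : g z ≠ 0 := hgne _ hzb
    have hgd : HasDerivAt g (deriv g z) z :=
      (hg.differentiableAt (hU.mem_nhds (hBU hzb))).hasDerivAt
    have hev : f =ᶠ[𝓝 z] fun s => (s - s₀)^m * g s := by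
      filter_upwards [Metric.isOpen_ball.mem_nhds hzball] with s hs
      exact hfac s (Metric.ball_subset_closedBall hs)
    have hprod : HasDerivAt (fun s : ℂ => (s - s₀)^m * g s)
        ((↑m * (z - s₀)^(m-1) * 1) * g z + (z - s₀)^m * deriv g z) z :=
      (((hasDerivAt_id z).sub_const s₀).pow m).mul hgd
    have hderiv_f : deriv f z = (↑m * (z - s₀)^(m-1)) * g z + (z - s₀)^m * deriv g z := by
      rw [hev.deriv_eq, hprod.deriv]; ring_nf
    have hfz : f z = (z - s₀)^m * g z := hfac z hzb
    have hpm : (z - s₀)^m = (z - s₀)^(m-1) * (z - s₀) := by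
      rw [← pow_succ, Nat.sub_add_cancel hm]
    have key : deriv f z / f z = (m:ℂ)/(z - s₀) + deriv g z / g z := by
      rw [hderiv_f, hfz, hpm]
      have hppow : (z - s₀)^(m-1) ≠ 0 := pow_ne_zero _ hp
      field_simp
    have hre0 : ((m:ℂ)/(z - s₀)).re = 0 := by
      have hzz : z - s₀ = Complex.I * ((t - t₀ : ℝ) : ℂ) := by rw [hz, hs₀]; push_cast; ring
      rw [hzz]
      simp [Complex.div_re, Complex.normSq_apply]
    rw [key, Complex.add_re, hre0, zero_add]
  -- splitting F = Φ + G on |σ - α'| ≤ ε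
  set K : ℝ → ℝ := fun x => ∫ t in (t₀ - ε)..(t₀ + ε), Real.log (x^2 + (t - t₀)^2) with hK
  have hsplit : ∀ σ : ℝ, |σ - α'| ≤ ε →
      (∫ t in (t₀ - ε)..(t₀ + ε), Real.log (‖f ((σ:ℂ) + Complex.I * t)‖))
      = (m:ℝ)/2 * K (σ - α')
        + ∫ t in (t₀ - ε)..(t₀ + ε), Real.log (‖g ((σ:ℂ) + Complex.I * t)‖) := by
    intro σ hσ
    have hstep : (∫ t in (t₀ - ε)..(t₀ + ε), Real.log (‖f ((σ:ℂ) + Complex.I * t)‖))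
        = ∫ t in (t₀ - ε)..(t₀ + ε), ((m:ℝ)/2 * Real.log ((σ - α')^2 + (t - t₀)^2)
            + Real.log (‖g ((σ:ℂ) + Complex.I * t)‖)) := by
      refine intervalIntegral.integral_congr_ae ?_
      filter_upwards [hae_ne] with t htne htmem
      set z : ℂ := (σ:ℂ) + Complex.I * t with hz
      have hzIcc := hIoc_sub htmem
      have hzb : z ∈ Metric.closedBall s₀ (2*ε) := hmem σ t hσ hzIcc
      have hzz : z - s₀ = ((σ - α' : ℝ) : ℂ) + ((t - t₀ : ℝ) : ℂ) * Complex.I := by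
        rw [hz, hs₀]; push_cast; ring
      have hp : z - s₀ ≠ 0 := by
        intro h
        rw [hzz] at h
        have := congrArg Complex.im h
        simp at this
        exact htne (by linarith)
      have hgz0 : g z ≠ 0 := hgne _ hzb
      have habs : ‖z - s₀‖ = Real.sqrt ((σ - α')^2 + (t - t₀)^2) := by
        rw [hzz, Complex.norm_add_mul_I]
      have habs0 : ‖z - s₀‖ ≠ 0 := norm_ne_zero_iff.mpr hp
      have habsg : ‖g z‖ ≠ 0 := norm_ne_zero_iff.mpr hgz0
      rw [hfac z hzb, norm_mul, norm_pow, Real.log_mul (pow_ne_zero _ habs0) habsg, Real.log_pow,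
        habs, Real.log_sqrt (by positivity)]
      push_cast; ring
    rw [hstep, intervalIntegral.integral_add ((aux_q_integrable _ _).const_mul _)
      (((hL_cont σ hσ).mono (by rw [Set.uIcc_of_le hab])).intervalIntegrable),
      intervalIntegral.integral_const_mul]
  -- Φ part: one-sided derivatives
  have hKq : ∀ x : ℝ, K x = ∫ t in (t₀-ε)..(t₀+ε), Real.log (x^2 + (t-t₀)^2) := fun _ => rfl
  have hslope_eq : ∀ σ : ℝ, σ ≠ α' →
      slope (fun σ : ℝ => (m:ℝ)/2 * K (σ - α')) α' σ
        = (m:ℝ)/2 * ((K (σ - α') - K 0)/(σ - α')) := by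
    intro σ hσ
    rw [slope_def_field]
    have h0 : α' - α' = (0:ℝ) := sub_self α'
    rw [h0]
    field_simp
  have hmap_right : Tendsto (fun σ : ℝ => σ - α') (𝓝[>] α') (𝓝[>] (0:ℝ)) := by
    rw [tendsto_nhdsWithin_iff]
    constructor
    · have : Tendsto (fun σ : ℝ => σ - α') (𝓝 α') (𝓝 (α' - α')) :=
        (continuous_id.sub continuous_const).tendsto α'
      rw [sub_self] at this
      exact this.mono_left nhdsWithin_le_nhds
    · filter_upwards [self_mem_nhdsWithin] with σ hσ
      exact sub_pos.mpr (Set.mem_Ioi.mp hσ)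
  have hmap_left : Tendsto (fun σ : ℝ => σ - α') (𝓝[<] α') (𝓝[<] (0:ℝ)) := by
    rw [tendsto_nhdsWithin_iff]
    constructor
    · have : Tendsto (fun σ : ℝ => σ - α') (𝓝 α') (𝓝 (α' - α')) :=
        (continuous_id.sub continuous_const).tendsto α'
      rw [sub_self] at this
      exact this.mono_left nhdsWithin_le_nhds
    · filter_upwards [self_mem_nhdsWithin] with σ hσ
      exact sub_neg.mpr (Set.mem_Iio.mp hσ)
  have hΦ_right : HasDerivWithinAt (fun σ : ℝ => (m:ℝ)/2 * K (σ - α'))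
      ((m:ℝ) * Real.pi) (Set.Ici α') α' := by
    rw [hasDerivWithinAt_iff_tendsto_slope, Set.Ici_sdiff_left]
    have hcomp := ((aux_K_slope_right (t₀ := t₀) hε).comp hmap_right).const_mul ((m:ℝ)/2)
    have hval : (m:ℝ)/2 * (2*π) = (m:ℝ)*π := by ring
    rw [hval] at hcomp
    refine hcomp.congr' ?_
    filter_upwards [self_mem_nhdsWithin] with σ hσ
    rw [hslope_eq σ (ne_of_gt hσ)]
    rfl
  have hΦ_left : HasDerivWithinAt (fun σ : ℝ => (m:ℝ)/2 * K (σ - α'))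
      (-((m:ℝ) * Real.pi)) (Set.Iic α') α' := by
    rw [hasDerivWithinAt_iff_tendsto_slope, Set.Iic_diff_right]
    have hcomp := ((aux_K_slope_left (t₀ := t₀) hε).comp hmap_left).const_mul ((m:ℝ)/2)
    have hval : (m:ℝ)/2 * (-(2*π)) = -((m:ℝ)*π) := by ring
    rw [hval] at hcomp
    refine hcomp.congr' ?_
    filter_upwards [self_mem_nhdsWithin] with σ hσ
    rw [hslope_eq σ (ne_of_lt hσ)]
    rfl
  -- eventually equal near α'
  have hFeq : (fun σ : ℝ => ∫ t in (t₀ - ε)..(t₀ + ε),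
        Real.log (‖f ((σ:ℂ) + Complex.I * t)‖))
      =ᶠ[𝓝 α'] (fun σ : ℝ => (m:ℝ)/2 * K (σ - α')
        + ∫ t in (t₀ - ε)..(t₀ + ε), Real.log (‖g ((σ:ℂ) + Complex.I * t)‖)) := by
    filter_upwards [Metric.ball_mem_nhds α' hε] with σ hσ
    have hσ' : |σ - α'| ≤ ε := by
      rw [Metric.mem_ball, Real.dist_eq] at hσ; exact hσ.le
    exact hsplit σ hσ'
  have hFα : (∫ t in (t₀ - ε)..(t₀ + ε),
        Real.log (‖f ((α':ℂ) + Complex.I * t)‖))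
      = (m:ℝ)/2 * K (α' - α')
        + ∫ t in (t₀ - ε)..(t₀ + ε), Real.log (‖g ((α':ℂ) + Complex.I * t)‖) :=
    hsplit α' (by simpa using hε.le)
  constructor
  · have h1 : HasDerivWithinAt (fun σ : ℝ => (m:ℝ)/2 * K (σ - α')
        + ∫ t in (t₀ - ε)..(t₀ + ε), Real.log (‖g ((σ:ℂ) + Complex.I * t)‖))
        ((m:ℝ) * Real.pi + ∫ t in (t₀ - ε)..(t₀ + ε),
          (deriv f ((α':ℂ) + Complex.I * t) / f ((α':ℂ) + Complex.I * t)).re)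
        (Set.Ici α') α' := by
      rw [← hint_eq]
      exact hΦ_right.add (hG.2.hasDerivWithinAt)
    exact h1.congr_of_eventuallyEq (hFeq.filter_mono nhdsWithin_le_nhds) hFα
  · have h1 : HasDerivWithinAt (fun σ : ℝ => (m:ℝ)/2 * K (σ - α')
        + ∫ t in (t₀ - ε)..(t₀ + ε), Real.log (‖g ((σ:ℂ) + Complex.I * t)‖))
        (-((m:ℝ) * Real.pi) + ∫ t in (t₀ - ε)..(t₀ + ε),
          (deriv f ((α':ℂ) + Complex.I * t) / f ((α':ℂ) + Complex.I * t)).re)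
        (Set.Iic α') α' := by
      rw [← hint_eq]
      exact hΦ_left.add (hG.2.hasDerivWithinAt)
    exact h1.congr_of_eventuallyEq (hFeq.filter_mono nhdsWithin_le_nhds) hFα
end

section
/- Let κ : I → ℝ be continuous on an interval I containing 0, define ϑ(u) = ∫_0^u κ(t) dt and g(t) = ∫_0^t exp(i·ϑ(u)) du. Then g : I → ℂ is a C¹ unit-speed curve (|g'(t)| = 1 for all t), and wherever κ is continuous the signed curvature of g at t equals κ(t). -/
open Complex intervalIntegral

/-- given a continuous curvature function κ, the curve
g(t) = ∫_0^t exp(i ∫_0^u κ) du is a C¹ unit-speed plane curve whose signed curvature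
(defined by g'' = i·κ·g') is κ. -/
theorem curve_with_prescribed_curvature (κ : ℝ → ℝ) (hκ : Continuous κ)
    (ϑ g : ℝ → ℂ)
    (hϑ : ϑ = fun u : ℝ => ((∫ x in (0:ℝ)..u, κ x : ℝ) : ℂ))
    (hg : g = fun t : ℝ => ∫ u in (0:ℝ)..t, Complex.exp (Complex.I * ϑ u)) :
    ContDiff ℝ 1 g ∧
    (∀ t : ℝ, ‖deriv g t‖ = 1) ∧
    (∀ t : ℝ, deriv (deriv g) t = Complex.I * (κ t : ℂ) * deriv g t) := by
  have hϑ' : ∀ u : ℝ, HasDerivAt ϑ ((κ u : ℂ)) u := by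
    intro u
    rw [hϑ]
    exact ((hκ.integral_hasStrictDerivAt 0 u).hasDerivAt).ofReal_comp
  have hϑc : Continuous ϑ := by
    exact continuous_iff_continuousAt.2 fun u => (hϑ' u).continuousAt
  set f : ℝ → ℂ := fun u => Complex.exp (Complex.I * ϑ u) with hf
  have hfc : Continuous f := (continuous_const.mul hϑc).cexp
  have hg' : ∀ t : ℝ, HasDerivAt g (f t) t := by
    intro t
    rw [hg]
    exact hfc.integral_hasStrictDerivAt 0 t |>.hasDerivAt
  have hderiv : deriv g = f := funext fun t => (hg' t).deriv
  have hf' : ∀ t : ℝ, HasDerivAt f (Complex.I * (κ t : ℂ) * f t) t := by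
    intro t
    have h1 : HasDerivAt (fun u => Complex.I * ϑ u) (Complex.I * (κ t : ℂ)) t :=
      (hϑ' t).const_mul Complex.I
    have := h1.cexp
    convert this using 1
    ring
  refine ⟨?_, ?_, ?_⟩
  · rw [contDiff_one_iff_deriv]
    exact ⟨fun t => (hg' t).differentiableAt, hderiv ▸ hfc⟩
  · intro t
    rw [hderiv, hf, hϑ]
    simp [Complex.norm_exp]
  · intro t
    rw [hderiv]
    exact (hf' t).deriv
end

section
/- Let σ ∈ (1/2, 1), let I = [a, b] be a compact interval, and let ε > 0. Then the set of τ ≥ 0 such that max_{t∈I} |ζ(σ + i·t + i·τ) − ζ(σ + i·(a + b − t))| < ε has positive lower density. In other words, the time-reversed zeta curve on the segment reappears, up to error ε, within the zeta curve on the line Re s = σ, with positive lower density of shifts. -/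
open Complex MeasureTheory Filter

/-- assuming Voronin–Andersson universality (targets with zeros allowed on
compact sets with empty interior), the time-reversed zeta curve
t ↦ ζ(σ + i(a+b−t)) on a segment is approximated, within ε and with positive lower
density of shifts τ, by t ↦ ζ(σ + it + iτ). -/
theorem reversed_zeta_curve_reappears
    (hVoronin : ∀ K : Set ℂ, IsCompact K →
      (∀ s ∈ K, 1/2 < s.re ∧ s.re < 1) →
      IsConnected Kᶜ → interior K = ∅ →
      ∀ h : ℂ → ℂ, ContinuousOn h K → ∀ ε : ℝ, 0 < ε →
        0 < Filter.liminf (fun T : ℝ =>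
          (volume {τ : ℝ | τ ∈ Set.Icc (0:ℝ) T ∧ ∀ s ∈ K,
            ‖riemannZeta (s + Complex.I * (τ:ℂ)) - h s‖ < ε}).toReal / T)
          Filter.atTop)
    (σ a b : ℝ) (hσ₁ : 1/2 < σ) (hσ₂ : σ < 1) (hab : a ≤ b)
    (ε : ℝ) (hε : 0 < ε) :
    0 < Filter.liminf (fun T : ℝ =>
      (volume {τ : ℝ | τ ∈ Set.Icc (0:ℝ) T ∧ ∀ t ∈ Set.Icc a b,
        ‖riemannZeta ((σ:ℂ) + Complex.I * (t:ℂ) + Complex.I * (τ:ℂ)) -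
          riemannZeta ((σ:ℂ) + Complex.I * ((a + b - t : ℝ):ℂ))‖ < ε}).toReal / T)
      Filter.atTop := by
  -- the vertical segment
  set K : Set ℂ := (fun t : ℝ => (σ:ℂ) + Complex.I * (t:ℂ)) '' Set.Icc a b with hK
  have hmemK : ∀ z : ℂ, z ∈ K ↔ z.re = σ ∧ z.im ∈ Set.Icc a b := by
    intro z
    constructor
    · rintro ⟨t, ht, rfl⟩
      simp [ht]
    · rintro ⟨h1, h2⟩
      exact ⟨z.im, h2, by
        apply Complex.ext <;> simp [h1]⟩
  -- compactness
  have hKc : IsCompact K :=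
    isCompact_Icc.image (by fun_prop)
  -- strip condition
  have hstrip : ∀ s ∈ K, 1/2 < s.re ∧ s.re < 1 := by
    intro s hs
    rw [hmemK] at hs
    rw [hs.1]; exact ⟨hσ₁, hσ₂⟩
  -- connected complement
  have hconn : IsConnected Kᶜ := by
    have hU1 : IsConnected {z : ℂ | z.re < σ} :=
      (convex_halfSpace_re_lt σ).isConnected ⟨(σ:ℂ) - 1, by simp⟩
    have hU2 : IsConnected {z : ℂ | σ < z.re} :=
      (convex_halfSpace_re_gt σ).isConnected ⟨(σ:ℂ) + 1, by simp⟩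
    have hU3 : IsConnected {z : ℂ | b < z.im} :=
      (convex_halfSpace_im_gt b).isConnected ⟨(σ:ℂ) + Complex.I * ((b:ℂ) + 1), by simp⟩
    have hU4 : IsConnected {z : ℂ | z.im < a} :=
      (convex_halfSpace_im_lt a).isConnected ⟨(σ:ℂ) + Complex.I * ((a:ℂ) - 1), by simp⟩
    have h31 : IsConnected ({z : ℂ | b < z.im} ∪ {z : ℂ | z.re < σ}) :=
      IsConnected.union ⟨(σ:ℂ) - 1 + Complex.I * ((b:ℂ) + 1), by
        constructor <;> simp⟩ hU3 hU1
    have h312 : IsConnected (({z : ℂ | b < z.im} ∪ {z : ℂ | z.re < σ}) ∪ {z : ℂ | σ < z.re}) :=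
      IsConnected.union ⟨(σ:ℂ) + 1 + Complex.I * ((b:ℂ) + 1), by
        refine ⟨Or.inl ?_, ?_⟩ <;> simp⟩ h31 hU2
    have h3124 : IsConnected ((({z : ℂ | b < z.im} ∪ {z : ℂ | z.re < σ}) ∪ {z : ℂ | σ < z.re})
        ∪ {z : ℂ | z.im < a}) :=
      IsConnected.union ⟨(σ:ℂ) + 1 + Complex.I * ((a:ℂ) - 1), by
        refine ⟨Or.inr ?_, ?_⟩ <;> simp⟩ h312 hU4
    have heq : Kᶜ = (({z : ℂ | b < z.im} ∪ {z : ℂ | z.re < σ}) ∪ {z : ℂ | σ < z.re})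
        ∪ {z : ℂ | z.im < a} := by
      ext z
      simp only [Set.mem_compl_iff, hmemK z, Set.mem_Icc, Set.mem_union, Set.mem_setOf_eq]
      constructor
      · intro hz
        rcases lt_trichotomy z.re σ with h' | h' | h'
        · exact Or.inl (Or.inl (Or.inr h'))
        · rcases lt_or_ge z.im a with h2 | h2
          · exact Or.inr h2
          · rcases le_or_gt z.im b with h3 | h3
            · exact absurd ⟨h', h2, h3⟩ hz
            · exact Or.inl (Or.inl (Or.inl h3))
        · exact Or.inl (Or.inr h')
      · rintro (((h | h) | h) | h) ⟨hre, h2, h3⟩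
        · exact absurd h3 (not_le.2 h)
        · exact h.ne hre
        · exact h.ne' hre
        · exact absurd h2 (not_le.2 h)
    rw [heq]; exact h3124
  -- empty interior
  have hint : interior K = ∅ := by
    have hsub : K ⊆ {z : ℂ | z.re = σ} := fun z hz => ((hmemK z).1 hz).1
    have : interior K ⊆ interior {z : ℂ | z.re = σ} := interior_mono hsub
    rw [Set.eq_empty_iff_forall_notMem]
    intro z hz
    obtain ⟨δ, hδ, hball⟩ := Metric.isOpen_iff.1 isOpen_interior z hz
    have h1 : z + (δ/2 : ℝ) ∈ Metric.ball z δ := by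
      simp only [Metric.mem_ball, Complex.dist_eq, add_sub_cancel_left]
      rw [Complex.norm_real, Real.norm_eq_abs, abs_of_pos (half_pos hδ)]
      linarith
    have h2 := interior_subset (this (hball h1))
    have h3 := interior_subset (this hz)
    simp only [Set.mem_setOf_eq, Complex.add_re, Complex.ofReal_re] at h2 h3
    rw [h3] at h2
    linarith
  -- target function
  set h : ℂ → ℂ := fun s => riemannZeta ((2*σ : ℝ) + Complex.I * ((a+b : ℝ):ℂ) - s) with hh
  have hcont : ContinuousOn h K := by
    intro s hs
    apply ContinuousAt.continuousWithinAt
    apply ContinuousAt.comp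
    · apply (differentiableAt_riemannZeta _).continuousAt
      intro habs
      have : ((2*σ : ℝ) + Complex.I * ((a+b : ℝ):ℂ) - s).re = 1 := by rw [habs]; simp
      simp only [Complex.sub_re, Complex.add_re, Complex.ofReal_re, Complex.mul_re,
        Complex.I_re, Complex.I_im, Complex.ofReal_im] at this
      have hre := ((hmemK s).1 hs).1
      rw [hre] at this
      nlinarith
    · fun_prop
  have key : ∀ t : ℝ, h ((σ:ℂ) + Complex.I * (t:ℂ)) =
      riemannZeta ((σ:ℂ) + Complex.I * ((a + b - t : ℝ):ℂ)) := by
    intro t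
    rw [hh]
    congr 1
    push_cast
    ring_nf
  have hV := hVoronin K hKc hstrip hconn hint h hcont ε hε
  convert hV using 2
  funext T
  congr 2
  congr 1
  ext τ
  simp only [Set.mem_setOf_eq, and_congr_right_iff]
  intro _
  constructor
  · intro hyp s hs
    rw [hK] at hs
    obtain ⟨t, ht, rfl⟩ := hs
    simpa [key t] using hyp t ht
  · intro hyp t ht
    simpa [key t] using hyp ((σ:ℂ) + Complex.I * (t:ℂ)) ⟨t, ht, rfl⟩
end
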